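/- A pair (A,B) of symmetric 3×3 complex matrices is equivalent under GL₂(ℂ)×GL₃(ℂ) to (I₃, diag(1,−1,0)) if and only if the binary cubic det(xA+yB) ∈ ℂ[x,y] factors as c·(a₁x+b₁y)(a₂x+b₂y)(a₃x+b₃y) with c ≠ 0 and the three vectors (aᵢ,bᵢ) ∈ ℂ² pairwise linearly independent; i.e. the generic orbit O₁₀ of (F₄,α₂) consists exactly of the pencils of symmetric matrices whose determinant has three distinct roots. -/

import Mathlib

open Matrix

/-- Two pairs of 3×3 complex matrices are equivalent under `GL₂(ℂ) × GL₃(ℂ)`, acting by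
`((a b; c d), Q) · (A, B) = (Q(aA+bB)Qᵀ, Q(cA+dB)Qᵀ)`. -/
def SEquiv (p q : Matrix (Fin 3) (Fin 3) ℂ × Matrix (Fin 3) (Fin 3) ℂ) : Prop :=
  ∃ (g : GL (Fin 2) ℂ) (Q : GL (Fin 3) ℂ),
    q.1 = Q.val * (g.val 0 0 • p.1 + g.val 0 1 • p.2) * Q.valᵀ ∧
    q.2 = Q.val * (g.val 1 0 • p.1 + g.val 1 1 • p.2) * Q.valᵀ

section Aux

open MvPolynomial

lemma eval_pencil (A B : Matrix (Fin 3) (Fin 3) ℂ) (f : Fin 2 → ℂ) :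
    eval f ((Matrix.of fun i j : Fin 3 =>
        C (A i j) * X 0 + C (B i j) * X 1 : Matrix (Fin 3) (Fin 3) (MvPolynomial (Fin 2) ℂ)).det)
      = (f 0 • A + f 1 • B).det := by
  rw [(eval f).map_det]
  congr 1
  ext i j
  simp [mul_comm]

lemma jacobi3 (X Y : Matrix (Fin 3) (Fin 3) ℂ) :
    (X + Y).det = X.det + trace (adjugate X * Y) + trace (adjugate Y * X) + Y.det := by
  simp only [det_fin_three, adjugate_fin_three, trace_fin_three, Matrix.mul_apply,
    Fin.sum_univ_three, Matrix.add_apply, Matrix.cons_val', Matrix.cons_val_zero,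
    Matrix.cons_val_one, Matrix.head_cons, Matrix.empty_val', Matrix.cons_val_fin_one,
    Matrix.head_fin_const, Matrix.of_apply, Matrix.cons_val_two, Matrix.tail_cons]
  ring

lemma polar3 (K : Matrix (Fin 3) (Fin 3) ℂ) (hs : Kᵀ = K)
    (h : ∀ u : Fin 3 → ℂ, u ⬝ᵥ (K *ᵥ u) = 0) : K = 0 := by
  have hsym : ∀ i j : Fin 3, K j i = K i j := fun i j => by
    have := congrFun (congrFun hs i) j
    simpa using this
  have h0 := h ![1,0,0]
  have h1 := h ![0,1,0]
  have h2 := h ![0,0,1]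
  have h01 := h ![1,1,0]
  have h02 := h ![1,0,1]
  have h12 := h ![0,1,1]
  simp [dotProduct, mulVec, Fin.sum_univ_three] at h0 h1 h2 h01 h02 h12
  have e01 : K 0 1 = 0 := by linear_combination (h01 - h0 - h1)/2 - (hsym 0 1)/2
  have e10 : K 1 0 = 0 := by linear_combination (h01 - h0 - h1)/2 + (hsym 0 1)/2
  have e02 : K 0 2 = 0 := by linear_combination (h02 - h0 - h2)/2 - (hsym 0 2)/2
  have e20 : K 2 0 = 0 := by linear_combination (h02 - h0 - h2)/2 + (hsym 0 2)/2
  have e12 : K 1 2 = 0 := by linear_combination (h12 - h1 - h2)/2 - (hsym 1 2)/2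
  have e21 : K 2 1 = 0 := by linear_combination (h12 - h1 - h2)/2 + (hsym 1 2)/2
  ext i j
  fin_cases i <;> fin_cases j <;>
    first | exact h0 | exact h1 | exact h2 | exact e01 | exact e10 | exact e02
          | exact e20 | exact e12 | exact e21

lemma trace_zero_of_sq_zero (M : Matrix (Fin 3) (Fin 3) ℂ) (h : M * M = 0) : trace M = 0 := by
  have : IsNilpotent M := ⟨2, by rw [pow_two, h]⟩
  exact (Matrix.isNilpotent_trace_of_isNilpotent this).eq_zero

lemma exists_good_vector (Ci Cj : Matrix (Fin 3) (Fin 3) ℂ) (hCi : Ciᵀ = Ci) (hCj : Cjᵀ = Cj)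
    (hdet : Ci.det = 0) (htr : trace (adjugate Ci * Cj) ≠ 0) :
    ∃ v : Fin 3 → ℂ, Ci *ᵥ v = 0 ∧ v ⬝ᵥ (Cj *ᵥ v) ≠ 0 := by
  set N := adjugate Ci with hN
  have hNt : Nᵀ = N := by rw [hN, adjugate_transpose, hCi]
  have hCN : Ci * N = 0 := by rw [hN, mul_adjugate, hdet, zero_smul]
  have hK : ¬ (∀ u : Fin 3 → ℂ, u ⬝ᵥ ((N * Cj * N) *ᵥ u) = 0) := by
    intro hall
    have hKs : (N * Cj * N)ᵀ = N * Cj * N := by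
      rw [transpose_mul, transpose_mul, hNt, hCj, Matrix.mul_assoc]
    have hK0 : N * Cj * N = 0 := polar3 _ hKs hall
    have hsq : (N * Cj) * (N * Cj) = 0 := by
      calc (N * Cj) * (N * Cj) = (N * Cj * N) * Cj := by
            rw [Matrix.mul_assoc (N * Cj) N Cj]
      _ = 0 := by rw [hK0, Matrix.zero_mul]
    exact htr (trace_zero_of_sq_zero _ hsq)
  push_neg at hK
  obtain ⟨u, hu⟩ := hK
  refine ⟨N *ᵥ u, ?_, ?_⟩
  · rw [mulVec_mulVec, hCN, zero_mulVec]
  · intro h0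
    apply hu
    calc u ⬝ᵥ ((N * Cj * N) *ᵥ u) = u ⬝ᵥ (N *ᵥ ((Cj * N) *ᵥ u)) := by
          rw [Matrix.mul_assoc, ← mulVec_mulVec]
    _ = (u ᵥ* N) ⬝ᵥ ((Cj * N) *ᵥ u) := by rw [dotProduct_mulVec]
    _ = (N *ᵥ u) ⬝ᵥ (Cj *ᵥ (N *ᵥ u)) := by rw [← mulVec_transpose, hNt, mulVec_mulVec]
    _ = 0 := h0

lemma key_step (A B : Matrix (Fin 3) (Fin 3) ℂ) (hA : Aᵀ = A) (hB : Bᵀ = B)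
    (c a0 b0 a1 b1 a2 b2 : ℂ) (hc : c ≠ 0)
    (H : ∀ x y : ℂ, (x • A + y • B).det
      = c * ((a0*x+b0*y) * ((a1*x+b1*y) * (a2*x+b2*y))))
    (h01 : a0*b1 ≠ a1*b0) (h02 : a0*b2 ≠ a2*b0) :
    ∃ v : Fin 3 → ℂ, (b0 • A - a0 • B) *ᵥ v = 0 ∧
      v ⬝ᵥ ((b1 • A - a1 • B) *ᵥ v) ≠ 0 := by
  set C0 := b0 • A - a0 • B with hC0def
  set C1 := b1 • A - a1 • B with hC1def
  have hC0s : C0ᵀ = C0 := by rw [hC0def, transpose_sub, transpose_smul, transpose_smul, hA, hB]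
  have hC1s : C1ᵀ = C1 := by rw [hC1def, transpose_sub, transpose_smul, transpose_smul, hA, hB]
  have hdet0 : C0.det = 0 := by
    have h := H b0 (-a0)
    have e : C0 = b0 • A + (-a0) • B := by rw [hC0def, sub_eq_add_neg, neg_smul]
    rw [e]
    linear_combination h
  have hdet1expr : C1.det = c * ((a0*b1 - b0*a1) * ((a1*b1-b1*a1) * (a2*b1 - b2*a1))) := by
    have h := H b1 (-a1)
    have e : C1 = b1 • A + (-a1) • B := by rw [hC1def, sub_eq_add_neg, neg_smul]
    rw [e]
    linear_combination h
  have Ft : ∀ t : ℂ, (C0 + t • C1).det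
      = c * (((a0*b0-b0*a0) + t*(a0*b1-b0*a1)) * ((((a1*b0-b1*a0) + t*(a1*b1-b1*a1))) *
          ((a2*b0-b2*a0) + t*(a2*b1-b2*a1)))) := by
    intro t
    have e : C0 + t • C1 = (b0 + t*b1) • A + (-(a0 + t*a1)) • B := by
      rw [hC0def, hC1def]; module
    rw [e, H]
    ring
  have Jt : ∀ t : ℂ, (C0 + t • C1).det
      = C0.det + t * trace (adjugate C0 * C1) + t^2 * trace (adjugate C1 * C0)
        + t^3 * C1.det := by
    intro t
    rw [jacobi3]
    rw [Matrix.mul_smul, trace_smul, adjugate_smul, Matrix.smul_mul, trace_smul, det_smul]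
    simp only [Fintype.card_fin, smul_eq_mul]
    try ring
  have key : ∀ t : ℂ, C0.det + t * trace (adjugate C0 * C1) + t^2 * trace (adjugate C1 * C0)
        + t^3 * C1.det
      = c * (((a0*b0-b0*a0) + t*(a0*b1-b0*a1)) * ((((a1*b0-b1*a0) + t*(a1*b1-b1*a1))) *
          ((a2*b0-b2*a0) + t*(a2*b1-b2*a1)))) := fun t => by rw [← Jt, Ft]
  have htau : trace (adjugate C0 * C1)
      = c * ((a0*b1 - b0*a1) * ((a1*b0 - b1*a0) * (a2*b0 - b2*a0))) := by
    have k1 := key 1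
    have k2 := key (-1)
    have k3 := key 2
    linear_combination k1 - k2/3 - k3/6 - (1/2) * hdet0
  have htau_ne : trace (adjugate C0 * C1) ≠ 0 := by
    rw [htau]
    apply mul_ne_zero hc
    apply mul_ne_zero (sub_ne_zero.mpr (fun h => h01 (by linear_combination h)))
    apply mul_ne_zero
    · exact sub_ne_zero.mpr (by intro h; exact h01 (by linear_combination -h))
    · exact sub_ne_zero.mpr (by intro h; exact h02 (by linear_combination -h))
  exact exists_good_vector C0 C1 hC0s hC1s hdet0 htau_ne

lemma stage1 (A B : Matrix (Fin 3) (Fin 3) ℂ) (hA : Aᵀ = A) (hB : Bᵀ = B)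
    (c : ℂ) (a b : Fin 3 → ℂ) (hc : c ≠ 0)
    (H : ∀ x y : ℂ, (x • A + y • B).det = c * ∏ i : Fin 3, (a i * x + b i * y))
    (hpair : ∀ i j : Fin 3, i ≠ j → a i * b j ≠ a j * b i) :
    ∃ v : Fin 3 → (Fin 3 → ℂ),
      (∀ i, (b i • A - a i • B) *ᵥ v i = 0) ∧
      (∀ i, ¬(v i ⬝ᵥ (A *ᵥ v i) = 0 ∧ v i ⬝ᵥ (B *ᵥ v i) = 0)) := by
  have expand : ∀ (x y : ℂ) (u w : Fin 3 → ℂ),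
      u ⬝ᵥ ((x • A - y • B) *ᵥ w) = x * (u ⬝ᵥ (A *ᵥ w)) - y * (u ⬝ᵥ (B *ᵥ w)) := by
    intro x y u w
    simp [dotProduct, mulVec, Fin.sum_univ_three, Matrix.sub_apply, Matrix.smul_apply]
    ring
  obtain ⟨v0, hv0k, hv0⟩ := key_step A B hA hB c (a 0) (b 0) (a 1) (b 1) (a 2) (b 2) hc
    (fun x y => by rw [H x y, Fin.prod_univ_three]; ring)
    (hpair 0 1 (by decide)) (hpair 0 2 (by decide))
  obtain ⟨v1, hv1k, hv1⟩ := key_step A B hA hB c (a 1) (b 1) (a 2) (b 2) (a 0) (b 0) hc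
    (fun x y => by rw [H x y, Fin.prod_univ_three]; ring)
    (hpair 1 2 (by decide)) (hpair 1 0 (by decide))
  obtain ⟨v2, hv2k, hv2⟩ := key_step A B hA hB c (a 2) (b 2) (a 0) (b 0) (a 1) (b 1) hc
    (fun x y => by rw [H x y, Fin.prod_univ_three]; ring)
    (hpair 2 0 (by decide)) (hpair 2 1 (by decide))
  refine ⟨![v0, v1, v2], ?_, ?_⟩
  · intro i; fin_cases i <;> simpa using (by assumption : _)
  · intro i
    fin_cases i <;> rintro ⟨h1, h2⟩
    · exact hv0 (by rw [expand (b 1) (a 1), show v0 ⬝ᵥ (A *ᵥ v0) = 0 from h1,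
        show v0 ⬝ᵥ (B *ᵥ v0) = 0 from h2]; ring)
    · exact hv1 (by rw [expand (b 2) (a 2), show v1 ⬝ᵥ (A *ᵥ v1) = 0 from h1,
        show v1 ⬝ᵥ (B *ᵥ v1) = 0 from h2]; ring)
    · exact hv2 (by rw [expand (b 0) (a 0), show v2 ⬝ᵥ (A *ᵥ v2) = 0 from h1,
        show v2 ⬝ᵥ (B *ᵥ v2) = 0 from h2]; ring)

lemma backward (A B : Matrix (Fin 3) (Fin 3) ℂ) (hA : Aᵀ = A) (hB : Bᵀ = B)
    (c : ℂ) (a b : Fin 3 → ℂ) (hc : c ≠ 0)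
    (H : ∀ x y : ℂ, (x • A + y • B).det = c * ∏ i : Fin 3, (a i * x + b i * y))
    (hpair : ∀ i j : Fin 3, i ≠ j → a i * b j ≠ a j * b i) :
    SEquiv (A, B) (1, diagonal ![1, -1, 0]) := by
  have expand : ∀ (x y : ℂ) (u w : Fin 3 → ℂ),
      u ⬝ᵥ ((x • A - y • B) *ᵥ w) = x * (u ⬝ᵥ (A *ᵥ w)) - y * (u ⬝ᵥ (B *ᵥ w)) := by
    intro x y u w
    simp [dotProduct, mulVec, Fin.sum_univ_three, Matrix.sub_apply, Matrix.smul_apply]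
    ring
  obtain ⟨v, hker, hdene'⟩ := stage1 A B hA hB c a b hc H hpair
  set d : Fin 3 → ℂ := fun i => v i ⬝ᵥ (A *ᵥ v i) with hd
  set e : Fin 3 → ℂ := fun i => v i ⬝ᵥ (B *ᵥ v i) with he
  have hdene : ∀ i, ¬(d i = 0 ∧ e i = 0) := hdene'
  have hde_rel : ∀ i, b i * d i - a i * e i = 0 := by
    intro i
    rw [hd, he, ← expand, hker i, dotProduct_zero]
  have hCs : ∀ i, (b i • A - a i • B)ᵀ = b i • A - a i • B := by
    intro i; rw [transpose_sub, transpose_smul, transpose_smul, hA, hB]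
  have hcross : ∀ i j, i ≠ j → v i ⬝ᵥ (A *ᵥ v j) = 0 ∧ v i ⬝ᵥ (B *ᵥ v j) = 0 := by
    intro i j hij
    have e1 : b i * (v i ⬝ᵥ (A *ᵥ v j)) - a i * (v i ⬝ᵥ (B *ᵥ v j)) = 0 := by
      rw [← expand, dotProduct_mulVec, ← mulVec_transpose, hCs i, hker i, zero_dotProduct]
    have e2 : b j * (v i ⬝ᵥ (A *ᵥ v j)) - a j * (v i ⬝ᵥ (B *ᵥ v j)) = 0 := by
      rw [← expand, hker j, dotProduct_zero]
    have hab := sub_ne_zero.mpr (hpair i j hij)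
    constructor
    · have h3 : (a i * b j - a j * b i) * (v i ⬝ᵥ (A *ᵥ v j)) = 0 := by
        linear_combination a i * e2 - a j * e1
      exact (mul_eq_zero.mp h3).resolve_left hab
    · have h3 : (a i * b j - a j * b i) * (v i ⬝ᵥ (B *ᵥ v j)) = 0 := by
        linear_combination b i * e2 - b j * e1
      exact (mul_eq_zero.mp h3).resolve_left hab
  have hde_indep : ∀ i j, i ≠ j → d i * e j - d j * e i ≠ 0 := by
    intro i j hij heq0
    have heq : d i * e j = d j * e i := by linear_combination heq0
    have hab := sub_ne_zero.mpr (hpair i j hij)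
    have hdd : d i * d j = 0 := by
      have h3 : (a i * b j - a j * b i) * (d i * d j) = 0 := by
        linear_combination (a i * d i) * hde_rel j - (a j * d j) * hde_rel i
          + (a i * a j) * heq
      exact (mul_eq_zero.mp h3).resolve_left hab
    have hee : e i * e j = 0 := by
      have h3 : (a i * b j - a j * b i) * (e i * e j) = 0 := by
        linear_combination (b i * b j) * heq - (b j * e j) * hde_rel i
          + (b i * e i) * hde_rel j
      exact (mul_eq_zero.mp h3).resolve_left hab
    have hde2 : d i * e j = 0 := by
      have h3 : (a i * b j - a j * b i) * (d i * e j) = 0 := by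
        linear_combination (a i * b j) * heq + (a i * e i) * hde_rel j
          - (a j * e j) * hde_rel i
      exact (mul_eq_zero.mp h3).resolve_left hab
    have hed : d j * e i = 0 := by rw [← heq]; exact hde2
    rcases not_and_or.mp (hdene i) with hdi | hei
    · exact (hdene j) ⟨(mul_eq_zero.mp hdd).resolve_left hdi,
        (mul_eq_zero.mp hde2).resolve_left hdi⟩
    · exact (hdene j) ⟨(mul_eq_zero.mp (by rw [mul_comm] at hed; exact hed)).resolve_left hei,
        (mul_eq_zero.mp hee).resolve_left hei⟩
  -- diagonalize
  set P : Matrix (Fin 3) (Fin 3) ℂ := Matrix.of (fun r s => v s r) with hPdef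
  have hPMP : ∀ (M : Matrix (Fin 3) (Fin 3) ℂ) (i j : Fin 3),
      (Pᵀ * M * P) i j = v i ⬝ᵥ (M *ᵥ v j) := by
    intro M i j
    simp [hPdef, Matrix.mul_apply, dotProduct, mulVec, Fin.sum_univ_three]
    ring
  have hPA : Pᵀ * A * P = diagonal d := by
    ext i j
    rw [hPMP]
    rcases eq_or_ne i j with rfl | hij
    · rw [diagonal_apply_eq]
    · rw [diagonal_apply_ne _ hij]; exact (hcross i j hij).1
  have hPB : Pᵀ * B * P = diagonal e := by
    ext i j
    rw [hPMP]
    rcases eq_or_ne i j with rfl | hij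
    · rw [diagonal_apply_eq]
    · rw [diagonal_apply_ne _ hij]; exact (hcross i j hij).2
  have hdetP : P.det ≠ 0 := by
    intro h0
    obtain ⟨w, hw0, hw⟩ := (Matrix.exists_mulVec_eq_zero_iff).mpr h0
    have hzA : diagonal d *ᵥ w = 0 := by
      rw [← hPA, ← mulVec_mulVec, hw, mulVec_zero]
    have hzB : diagonal e *ᵥ w = 0 := by
      rw [← hPB, ← mulVec_mulVec, hw, mulVec_zero]
    apply hw0
    funext i
    have hzA' : d i * w i = 0 := by
      have := congrFun hzA i; rwa [mulVec_diagonal] at this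
    have hzB' : e i * w i = 0 := by
      have := congrFun hzB i; rwa [mulVec_diagonal] at this
    rcases not_and_or.mp (hdene i) with hdi | hei
    · exact (mul_eq_zero.mp hzA').resolve_left hdi
    · exact (mul_eq_zero.mp hzB').resolve_left hei
  have hmid : ∀ x y : ℂ, Pᵀ * (x • A + y • B) * P = diagonal (fun i => x * d i + y * e i) := by
    intro x y
    rw [Matrix.mul_add, Matrix.add_mul, Matrix.mul_smul, Matrix.smul_mul,
      Matrix.mul_smul, Matrix.smul_mul, hPA, hPB]
    ext i j
    rcases eq_or_ne i j with rfl | hij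
    · simp [diagonal_apply_eq]
    · simp [diagonal_apply_ne _ hij]
  -- scalars
  set Δ : ℂ := d 0 * e 1 - d 1 * e 0 with hΔdef
  have hΔ : Δ ≠ 0 := hde_indep 0 1 (by decide)
  set s1 : ℂ := e 2 * d 0 - d 2 * e 0 with hs1def
  have hs1 : s1 ≠ 0 := by
    intro h; exact hde_indep 0 2 (by decide) (by linear_combination h)
  set s2 : ℂ := e 2 * d 1 - d 2 * e 1 with hs2def
  have hs2 : s2 ≠ 0 := by
    intro h; exact hde_indep 1 2 (by decide) (by linear_combination h)
  set α : ℂ := (s1 * e 1 + s2 * e 0) / Δ with hαdef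
  set β : ℂ := (-(s2 * d 0) - s1 * d 1) / Δ with hβdef
  set t : Fin 3 → ℂ := fun i => α * d i + β * e i with htdef
  have ht0 : t 0 = s1 := by
    rw [htdef, hαdef, hβdef]; field_simp; ring
  have ht1 : t 1 = -s2 := by
    rw [htdef, hαdef, hβdef]; field_simp; ring
  have ht2 : t 2 = -2 * s1 * s2 / Δ := by
    rw [htdef, hαdef, hβdef]; field_simp; ring
  have htne : ∀ i, t i ≠ 0 := by
    intro i
    fin_cases i
    · show t 0 ≠ 0
      rw [ht0]; exact hs1
    · show t 1 ≠ 0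
      rw [ht1]; exact neg_ne_zero.mpr hs2
    · show t 2 ≠ 0
      rw [ht2]
      exact div_ne_zero (by exact mul_ne_zero (mul_ne_zero (by norm_num) hs1) hs2) hΔ
  have hsq : ∀ i : Fin 3, ∃ r : ℂ, r ^ 2 = t i := fun i =>
    IsAlgClosed.exists_pow_nat_eq (t i) (by norm_num)
  choose r hr using hsq
  have hrne : ∀ i, r i ≠ 0 := by
    intro i h0
    exact htne i (by rw [← hr i, h0]; ring)
  set S : Matrix (Fin 3) (Fin 3) ℂ := diagonal (fun i => (r i)⁻¹) with hSdef
  set Gmat : Matrix (Fin 2) (Fin 2) ℂ := !![α, β; e 2, -(d 2)] with hGdef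
  have hdetG : Gmat.det ≠ 0 := by
    rw [hGdef, det_fin_two_of]
    have : α * -(d 2) - β * e 2 = -(t 2) := by rw [htdef]; ring
    rw [this]
    exact neg_ne_zero.mpr (htne 2)
  set Qmat : Matrix (Fin 3) (Fin 3) ℂ := S * Pᵀ with hQdef
  have hdetQ : Qmat.det ≠ 0 := by
    rw [hQdef, det_mul, det_transpose]
    apply mul_ne_zero _ hdetP
    rw [hSdef, det_diagonal]
    exact Finset.prod_ne_zero_iff.mpr (fun i _ => inv_ne_zero (hrne i))
  have hGu : IsUnit Gmat := (Matrix.isUnit_iff_isUnit_det _).mpr hdetG.isUnit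
  have hQu : IsUnit Qmat := (Matrix.isUnit_iff_isUnit_det _).mpr hdetQ.isUnit
  have hconj : ∀ x y : ℂ,
      Qmat * (x • A + y • B) * Qmatᵀ
        = diagonal (fun i => (r i)⁻¹ * ((x * d i + y * e i) * (r i)⁻¹)) := by
    intro x y
    have h1 : Qmat * (x • A + y • B) * Qmatᵀ = S * (Pᵀ * (x • A + y • B) * P) * S := by
      rw [hQdef, transpose_mul, transpose_transpose, hSdef, diagonal_transpose]
      simp only [Matrix.mul_assoc]
    rw [h1, hmid, hSdef, diagonal_mul_diagonal, diagonal_mul_diagonal]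
    refine congrArg Matrix.diagonal ?_
    funext i
    ring
  refine ⟨hGu.unit, hQu.unit, ?_, ?_⟩
  · show (1 : Matrix (Fin 3) (Fin 3) ℂ)
      = hQu.unit.val * (hGu.unit.val 0 0 • A + hGu.unit.val 0 1 • B) * hQu.unit.valᵀ
    rw [IsUnit.unit_spec, IsUnit.unit_spec]
    have hg00 : Gmat 0 0 = α := by rw [hGdef]; simp
    have hg01 : Gmat 0 1 = β := by rw [hGdef]; simp
    rw [hg00, hg01, hconj α β, ← diagonal_one]
    refine congrArg Matrix.diagonal ?_
    funext i
    have hti : α * d i + β * e i = r i ^ 2 := (hr i).symm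
    rw [hti, pow_two]
    field_simp
    rw [div_self (hrne i)]
  · show diagonal ![(1:ℂ), -1, 0]
      = hQu.unit.val * (hGu.unit.val 1 0 • A + hGu.unit.val 1 1 • B) * hQu.unit.valᵀ
    rw [IsUnit.unit_spec, IsUnit.unit_spec]
    have hg10 : Gmat 1 0 = e 2 := by rw [hGdef]; simp
    have hg11 : Gmat 1 1 = -(d 2) := by rw [hGdef]; simp
    rw [hg10, hg11, hconj (e 2) (-(d 2))]
    refine congrArg Matrix.diagonal ?_
    funext i
    fin_cases i
    · show (1 : ℂ) = (r 0)⁻¹ * ((e 2 * d 0 + -(d 2) * e 0) * (r 0)⁻¹)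
      have h' : e 2 * d 0 + -(d 2) * e 0 = r 0 ^ 2 := by rw [hr 0, ht0, hs1def]; ring
      rw [h', pow_two]
      field_simp
      rw [div_self (hrne 0)]
    · show (-1 : ℂ) = (r 1)⁻¹ * ((e 2 * d 1 + -(d 2) * e 1) * (r 1)⁻¹)
      have h' : e 2 * d 1 + -(d 2) * e 1 = -(r 1 ^ 2) := by rw [hr 1, ht1, hs2def]; ring
      rw [h', pow_two]
      field_simp
      rw [div_self (hrne 1)]
    · show (0 : ℂ) = (r 2)⁻¹ * ((e 2 * d 2 + -(d 2) * e 2) * (r 2)⁻¹)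
      rw [show e 2 * d 2 + -(d 2) * e 2 = 0 from by ring]
      ring

lemma forward (A B : Matrix (Fin 3) (Fin 3) ℂ)
    (h : SEquiv (A, B) (1, diagonal ![1, -1, 0])) :
    ∃ (c : ℂ) (a b : Fin 3 → ℂ), c ≠ 0 ∧
      (∀ x y : ℂ, (x • A + y • B).det = c * ∏ i : Fin 3, (a i * x + b i * y)) ∧
      (∀ i j : Fin 3, i ≠ j → a i * b j ≠ a j * b i) := by
  obtain ⟨g, Q, h1', h2'⟩ := h
  set D : Matrix (Fin 3) (Fin 3) ℂ := diagonal ![1, -1, 0] with hDdef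
  replace h1' : (1 : Matrix (Fin 3) (Fin 3) ℂ)
      = Q.val * (g.val 0 0 • A + g.val 0 1 • B) * Q.valᵀ := h1'
  replace h2' : D = Q.val * (g.val 1 0 • A + g.val 1 1 • B) * Q.valᵀ := h2'
  set α : ℂ := g.val 0 0 with hα
  set β : ℂ := g.val 0 1 with hβ
  set γ : ℂ := g.val 1 0 with hγ
  set δ : ℂ := g.val 1 1 with hδ
  set R : Matrix (Fin 3) (Fin 3) ℂ := (↑(Q⁻¹) : Matrix (Fin 3) (Fin 3) ℂ) with hRdef
  have hRQ : R * Q.val = 1 := by exact_mod_cast Q.inv_mul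
  have key : ∀ M : Matrix (Fin 3) (Fin 3) ℂ, R * (Q.val * M * Q.valᵀ) * Rᵀ = M := by
    intro M
    calc R * (Q.val * M * Q.valᵀ) * Rᵀ = (R * Q.val) * (M * (R * Q.val)ᵀ) := by
          rw [transpose_mul]
          simp only [Matrix.mul_assoc]
    _ = M := by rw [hRQ, transpose_one, Matrix.mul_one, Matrix.one_mul]
  have hA1 : R * Rᵀ = α • A + β • B := by
    have := key (α • A + β • B)
    rw [← h1'] at this
    rw [← this, Matrix.mul_one]
  have hB1 : R * D * Rᵀ = γ • A + δ • B := by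
    have := key (γ • A + δ • B)
    rw [← h2'] at this
    rw [← this]
  set Δ : ℂ := α * δ - β * γ with hΔdef
  have hΔ : Δ ≠ 0 := by
    have hu := (Matrix.isUnit_iff_isUnit_det _).mp g.isUnit
    have hdet : g.val.det = Δ := by rw [det_fin_two, hΔdef]
    rw [hdet] at hu
    exact hu.ne_zero
  set p : ℂ := δ / Δ with hp
  set q : ℂ := -β / Δ with hq
  set r : ℂ := -γ / Δ with hrr
  set s : ℂ := α / Δ with hs
  have c1 : p * α + q * γ = 1 := by rw [hp, hq]; field_simp; ring
  have c2 : p * β + q * δ = 0 := by rw [hp, hq]; field_simp; ring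
  have c3 : r * α + s * γ = 0 := by rw [hrr, hs]; field_simp; ring
  have c4 : r * β + s * δ = 1 := by rw [hrr, hs]; field_simp; ring
  have hkey2 : (p * s - q * r) * Δ = 1 := by
    rw [hp, hq, hrr, hs]
    field_simp
    rw [hΔdef]
    ring
  have hAeq : A = p • (R * Rᵀ) + q • (R * D * Rᵀ) := by
    rw [hA1, hB1]
    ext i j
    simp only [Matrix.add_apply, Matrix.smul_apply, smul_eq_mul]
    linear_combination (-(A i j)) * c1 - (B i j) * c2
  have hBeq : B = r • (R * Rᵀ) + s • (R * D * Rᵀ) := by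
    rw [hA1, hB1]
    ext i j
    simp only [Matrix.add_apply, Matrix.smul_apply, smul_eq_mul]
    linear_combination (-(A i j)) * c3 - (B i j) * c4
  have hdiag : ∀ u v : ℂ, u • (1 : Matrix (Fin 3) (Fin 3) ℂ) + v • D
      = diagonal ![u + v, u - v, u] := by
    intro u v
    rw [hDdef]
    ext i j
    rcases eq_or_ne i j with rfl | hij
    · fin_cases i <;>
        simp [Matrix.add_apply, Matrix.smul_apply, Matrix.one_apply, diagonal_apply_eq,
          smul_eq_mul] <;> ring
    · simp [Matrix.add_apply, Matrix.smul_apply, Matrix.one_apply_ne hij,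
        diagonal_apply_ne _ hij]
  have step : ∀ u v : ℂ, R * (u • (1 : Matrix (Fin 3) (Fin 3) ℂ) + v • D) * Rᵀ
      = u • (R * Rᵀ) + v • (R * D * Rᵀ) := by
    intro u v
    rw [Matrix.mul_add, Matrix.add_mul, Matrix.mul_smul, Matrix.smul_mul,
      Matrix.mul_smul, Matrix.smul_mul, Matrix.mul_one]
  refine ⟨R.det * R.det, ![p + q, p - q, p], ![r + s, r - s, r],
    mul_ne_zero ?_ ?_, ?_, ?_⟩
  · intro h0
    have := Q⁻¹.isUnit
    have := ((Matrix.isUnit_iff_isUnit_det _).mp this).ne_zero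
    exact this h0
  · intro h0
    have := Q⁻¹.isUnit
    have := ((Matrix.isUnit_iff_isUnit_det _).mp this).ne_zero
    exact this h0
  · intro x y
    have hxy : x • A + y • B
        = R * diagonal ![(x*p+y*r) + (x*q+y*s), (x*p+y*r) - (x*q+y*s), (x*p+y*r)] * Rᵀ := by
      rw [← hdiag, step, hAeq, hBeq]
      module
    rw [hxy, det_mul, det_mul, det_transpose, det_diagonal, Fin.prod_univ_three,
      Fin.prod_univ_three]
    simp only [Matrix.cons_val_zero, Matrix.cons_val_one, Matrix.head_cons,
      Matrix.cons_val_two, Matrix.tail_cons]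
    ring
  · intro i j hij
    fin_cases i <;> fin_cases j
    · exact absurd rfl hij
    · show ¬((p+q)*(r-s) = (p-q)*(r+s))
      intro h0
      exact one_ne_zero (α := ℂ) (by linear_combination (-(Δ/2)) * h0 - hkey2)
    · show ¬((p+q)*r = p*(r+s))
      intro h0
      exact one_ne_zero (α := ℂ) (by linear_combination (-Δ) * h0 - hkey2)
    · show ¬((p-q)*(r+s) = (p+q)*(r-s))
      intro h0
      exact one_ne_zero (α := ℂ) (by linear_combination (Δ/2) * h0 - hkey2)
    · exact absurd rfl hij
    · show ¬((p-q)*r = p*(r-s))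
      intro h0
      exact one_ne_zero (α := ℂ) (by linear_combination Δ * h0 - hkey2)
    · show ¬(p*(r+s) = (p+q)*r)
      intro h0
      exact one_ne_zero (α := ℂ) (by linear_combination Δ * h0 - hkey2)
    · show ¬(p*(r-s) = (p-q)*r)
      intro h0
      exact one_ne_zero (α := ℂ) (by linear_combination (-Δ) * h0 - hkey2)
    · exact absurd rfl hij

end Aux

open MvPolynomial in
/-- A pair `(A, B)` of symmetric 3×3 complex matrices is `GL₂(ℂ) × GL₃(ℂ)`-equivalent to
`(I₃, diag(1,−1,0))` if and only if the binary cubic `det(xA + yB)` factors as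
`c·(a₁x+b₁y)(a₂x+b₂y)(a₃x+b₃y)` with `c ≠ 0` and the three vectors `(aᵢ, bᵢ)` pairwise
linearly independent: the generic orbit `O₁₀` of `(F₄, α₂)` consists exactly of the pencils
of symmetric matrices whose determinant has three distinct roots. -/
theorem generic_symmetric_pencil_iff_three_distinct_roots (A B : Matrix (Fin 3) (Fin 3) ℂ)
    (hA : A.IsSymm) (hB : B.IsSymm) :
    SEquiv (A, B) (1, diagonal ![1, -1, 0]) ↔
    ∃ (c : ℂ) (a b : Fin 3 → ℂ), c ≠ 0 ∧
      (Matrix.of fun i j : Fin 3 =>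
          C (A i j) * X 0 + C (B i j) * X 1 : Matrix (Fin 3) (Fin 3) (MvPolynomial (Fin 2) ℂ)).det
        = C c * ∏ i : Fin 3, (C (a i) * X 0 + C (b i) * X 1) ∧
      (∀ i j : Fin 3, i ≠ j → a i * b j ≠ a j * b i) := by
  constructor
  · intro h
    obtain ⟨c, a, b, hc, Hnum, hpair⟩ := forward A B h
    refine ⟨c, a, b, hc, ?_, hpair⟩
    apply MvPolynomial.funext
    intro f
    rw [eval_pencil, Hnum (f 0) (f 1)]
    simp [map_prod]
  · rintro ⟨c, a, b, hc, hdet, hpair⟩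
    refine backward A B hA hB c a b hc ?_ hpair
    intro x y
    have h := eval_pencil A B ![x, y]
    rw [hdet] at h
    simp only [Matrix.cons_val_zero, Matrix.cons_val_one, Matrix.head_cons] at h
    rw [← h]
    simp [map_prod]
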